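/- Let f be a monic irreducible polynomial over F_q of degree n with root α, and let β be a root of x^2 - αx + 1 not lying in F_q(α). Then the trace of α from F_q(α) to F_q equals the trace of β from F_q(β) to F_q. -/

import Mathlib

open Polynomial
open IntermediateField

set_option maxHeartbeats 1000000
set_option synthInstance.maxHeartbeats 200000

/-- If `f` is monic irreducible of degree `n` over a finite field `K` with root `α`, and
`β` is a root of `x² - αx + 1` with `β ∉ K(α)`, then `tr_{K(α)/K}(α) = tr_{K(β)/K}(β)`. -/
theorem stmt2 {K : Type} [Field K] [Fintype K] {n : ℕ} (hn : 1 ≤ n)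
    (f : K[X]) (hmonic : f.Monic) (hirr : Irreducible f) (hdeg : f.natDegree = n)
    (α β : AlgebraicClosure K) (hα : aeval α f = 0)
    (hβ : β ^ 2 - α * β + 1 = 0) (hβα : β ∉ IntermediateField.adjoin K {α}) :
    Algebra.trace K (IntermediateField.adjoin K {α})
        ⟨α, IntermediateField.mem_adjoin_simple_self K α⟩
      = Algebra.trace K (IntermediateField.adjoin K {β})
        ⟨β, IntermediateField.mem_adjoin_simple_self K β⟩ := by
  have hαint : IsIntegral K α := ⟨f, hmonic, by rwa [aeval_def] at hα⟩
  haveI : FiniteDimensional K K⟮α⟯ := IntermediateField.adjoin.finiteDimensional hαint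
  let α' : K⟮α⟯ := ⟨α, IntermediateField.mem_adjoin_simple_self K α⟩
  let g : (↥K⟮α⟯)[X] := X ^ 2 - C α' * X + 1
  have hmapα : algebraMap (↥K⟮α⟯) (AlgebraicClosure K) α' = α := rfl
  have hgval : aeval β g = 0 := by
    show aeval β (X ^ 2 - C α' * X + 1) = 0
    rw [map_add, map_sub, map_mul, aeval_C, map_pow, aeval_X, map_one, hmapα]
    exact hβ
  have hgform : g = X ^ 2 + (-(C α' * X) + 1) := by ring
  have hlow : (-(C α' * X) + 1).degree < 2 := by
    refine lt_of_le_of_lt (degree_add_le _ _) ?_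
    rw [max_lt_iff, degree_neg]
    constructor
    · exact lt_of_le_of_lt (degree_mul_le _ _) (by
        simpa using lt_of_le_of_lt (add_le_add_left (degree_C_le) 1) (by norm_num))
    · exact lt_of_le_of_lt degree_one_le (by norm_num)
  have hgmonic : g.Monic := by
    rw [hgform]; exact Polynomial.monic_X_pow_add hlow
  have hgdeg : g.natDegree = 2 := by
    rw [hgform]
    have : (X ^ 2 + (-(C α' * X) + 1) : (↥K⟮α⟯)[X]).degree = 2 := by
      rw [degree_add_eq_left_of_degree_lt (by rw [degree_X_pow]; exact_mod_cast hlow), degree_X_pow]; rfl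
    exact natDegree_eq_of_degree_eq_some this
  have hβint : IsIntegral (↥K⟮α⟯) β := ⟨g, hgmonic, hgval⟩
  have hmin : minpoly (↥K⟮α⟯) β = g := by
    have hdvd : minpoly (↥K⟮α⟯) β ∣ g := minpoly.dvd _ _ hgval
    have h2 : 2 ≤ (minpoly (↥K⟮α⟯) β).natDegree := by
      rw [minpoly.two_le_natDegree_iff hβint]
      rintro ⟨y, rfl⟩
      exact hβα y.2
    refine Polynomial.eq_of_monic_of_associated (minpoly.monic hβint) hgmonic ?_
    exact Polynomial.associated_of_dvd_of_natDegree_le hdvd hgmonic.ne_zero (by omega)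
  haveI : FiniteDimensional (↥K⟮α⟯) (↥(IntermediateField.adjoin (↥K⟮α⟯) {β})) :=
    IntermediateField.adjoin.finiteDimensional hβint
  -- the relative trace of β equals α'
  have htr1 : Algebra.trace (↥K⟮α⟯) (↥(IntermediateField.adjoin (↥K⟮α⟯) {β}))
      (IntermediateField.AdjoinSimple.gen (↥K⟮α⟯) β) = α' := by
    have h := (IntermediateField.adjoin.powerBasis hβint).trace_gen_eq_nextCoeff_minpoly
    rw [IntermediateField.adjoin.powerBasis_gen, IntermediateField.minpoly_gen, hmin] at h
    rw [h]
    have hnc : g.nextCoeff = -α' := by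
      rw [nextCoeff_of_natDegree_pos (by rw [hgdeg]; norm_num), hgdeg]
      show (X ^ 2 - C α' * X + 1 : (↥K⟮α⟯)[X]).coeff 1 = -α'
      simp [coeff_one]
    rw [hnc, neg_neg]
  -- β ≠ 0 and α ∈ K⟮β⟯
  have hβne : β ≠ 0 := by
    intro h
    rw [h] at hβ
    simp at hβ
  have hαmem : α ∈ K⟮β⟯ := by
    have hβmem : β ∈ K⟮β⟯ := IntermediateField.mem_adjoin_simple_self K β
    have hαeq : α = (β ^ 2 + 1) * β⁻¹ := by
      field_simp
      linear_combination -hβ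
    rw [hαeq]
    exact mul_mem (add_mem (pow_mem hβmem 2) (one_mem _)) (inv_mem hβmem)
  have hres : (IntermediateField.adjoin (↥K⟮α⟯) {β}).restrictScalars K = K⟮β⟯ := by
    rw [IntermediateField.adjoin_adjoin_left]
    apply le_antisymm
    · rw [IntermediateField.adjoin_le_iff]
      rintro x hx
      simp only [Set.mem_union, Set.mem_singleton_iff] at hx
      rcases hx with rfl | rfl
      · exact hαmem
      · exact IntermediateField.mem_adjoin_simple_self K _
    · exact IntermediateField.adjoin.mono K _ _ Set.subset_union_right
  -- transfer the trace through the equality of fields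
  let e := IntermediateField.equivOfEq hres
  have hβmem' : β ∈ (IntermediateField.adjoin (↥K⟮α⟯) {β}).restrictScalars K := by
    rw [hres]; exact IntermediateField.mem_adjoin_simple_self K β
  have hecast : e ⟨β, hβmem'⟩ = ⟨β, IntermediateField.mem_adjoin_simple_self K β⟩ := by
    ext
    rfl
  have h1 : Algebra.trace K (↥K⟮β⟯) ⟨β, IntermediateField.mem_adjoin_simple_self K β⟩
      = Algebra.trace K (↥((IntermediateField.adjoin (↥K⟮α⟯) {β}).restrictScalars K))
        ⟨β, hβmem'⟩ := by
    rw [← hecast]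
    exact Algebra.trace_eq_of_algEquiv e _
  have h2 : Algebra.trace K (↥((IntermediateField.adjoin (↥K⟮α⟯) {β}).restrictScalars K))
        ⟨β, hβmem'⟩
      = Algebra.trace K (↥(IntermediateField.adjoin (↥K⟮α⟯) {β}))
        (IntermediateField.AdjoinSimple.gen (↥K⟮α⟯) β) := rfl
  rw [h1, h2, ← Algebra.trace_trace (S := ↥K⟮α⟯) (x := IntermediateField.AdjoinSimple.gen (↥K⟮α⟯) β), htr1]
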